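/- Fix ε ∈ (0,1) and let B be a ball of radius r contained in Ω = [ε,1]². There is a constant C > 0, depending only on ε, such that for all distinct pairs (a,b), (a',b') ∈ ℤ_{≥0}² with gcd(a,b) = gcd(a',b') = 1, with h := h_{a,b} ≥ h' := h_{a',b'} both sufficiently large, one has |σ_{a,b} ∩ σ_{a',b'} ∩ B| ≤ C |B| (ψ(h)/h)(ψ(h')/h')(1 + 1/(r h sin α)), where α = α(a,b,a',b') is the angle between (a²,b²) and (a'²,b'²). -/

import Mathlib

open MeasureTheory Filter Set

/-- The set `σ_{a,b}(c) = {(x,y) ∈ [0,1]² : |a²x + b²y − c²| < ψ(h_{a,b})}`,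
where `h_{a,b} = max(a,b)`. -/
def sigC (ψ : ℝ → ℝ) (a b c : ℕ) : Set (EuclideanSpace ℝ (Fin 2)) :=
  {p | p 0 ∈ Set.Icc (0 : ℝ) 1 ∧ p 1 ∈ Set.Icc (0 : ℝ) 1 ∧
    |(a : ℝ) ^ 2 * p 0 + (b : ℝ) ^ 2 * p 1 - (c : ℝ) ^ 2| < ψ ((max a b : ℕ) : ℝ)}

/-- The set `σ_{a,b} = ⋃_{c ∈ ℤ_{≥0}} σ_{a,b}(c)`. -/
def sigU (ψ : ℝ → ℝ) (a b : ℕ) : Set (EuclideanSpace ℝ (Fin 2)) :=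
  ⋃ c : ℕ, sigC ψ a b c

/-- The square `Ω = [ε,1]²`. -/
def unitSq (ε : ℝ) : Set (EuclideanSpace ℝ (Fin 2)) :=
  {p | p 0 ∈ Set.Icc ε 1 ∧ p 1 ∈ Set.Icc ε 1}

/-- The vector `(a², b²) ∈ ℝ²`. -/
noncomputable def vSq (a b : ℕ) : EuclideanSpace ℝ (Fin 2) := WithLp.toLp 2 ![(a : ℝ) ^ 2, (b : ℝ) ^ 2]

/-- The angle `α(a,b,a',b')` between `(a²,b²)` and `(a'²,b'²)`. -/
noncomputable def ang (a b a' b' : ℕ) : ℝ :=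
  InnerProductGeometry.angle (vSq a b) (vSq a' b')

local notation "E2" => EuclideanSpace ℝ (Fin 2)

section Aux

lemma box_vol (s₁ t₁ s₂ t₂ : ℝ) :
    volume {p : E2 | p 0 ∈ Ioo s₁ t₁ ∧ p 1 ∈ Ioo s₂ t₂} =
      ENNReal.ofReal (t₁ - s₁) * ENNReal.ofReal (t₂ - s₂) := by
  have h : {p : E2 | p 0 ∈ Ioo s₁ t₁ ∧ p 1 ∈ Ioo s₂ t₂} =
      (MeasurableEquiv.toLp 2 (Fin 2 → ℝ)).symm ⁻¹' (Set.univ.pi ![Ioo s₁ t₁, Ioo s₂ t₂]) := by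
    ext p
    simp [Set.mem_pi, Fin.forall_fin_two]
  have hm : MeasurableSet (Set.univ.pi ![Ioo s₁ t₁, Ioo s₂ t₂]) := by
    apply MeasurableSet.univ_pi
    intro i
    fin_cases i <;> simp [measurableSet_Ioo]
  rw [h, (EuclideanSpace.volume_preserving_symm_measurableEquiv_toLp (Fin 2)).measure_preimage
    hm.nullMeasurableSet, volume_pi_pi]
  simp [Fin.prod_univ_two]

lemma strip_vol (u₀ u₁ w₀ w₁ s t δ γ : ℝ) (hδ : 0 ≤ δ) (hγ : 0 ≤ γ)
    (hD : u₀ * w₁ - u₁ * w₀ ≠ 0) :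
    volume {p : E2 | |u₀ * p 0 + u₁ * p 1 - s| < δ ∧ |w₀ * p 0 + w₁ * p 1 - t| < γ}
      ≤ ENNReal.ofReal (2 * δ * (2 * γ) / |u₀ * w₁ - u₁ * w₀|) := by
  set M : Matrix (Fin 2) (Fin 2) ℝ := !![u₀, u₁; w₀, w₁] with hM
  set f := Matrix.toEuclideanLin M with hf
  have hdet : LinearMap.det f = u₀ * w₁ - u₁ * w₀ := by
    rw [hf, Matrix.toEuclideanLin_eq_toLin, ← LinearMap.det_toMatrix (PiLp.basisFun 2 ℝ (Fin 2)),
      LinearMap.toMatrix_toLin, hM]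
    simp [Matrix.det_fin_two]
  have happ : ∀ (p : E2) (i : Fin 2), (f p) i = M i 0 * p 0 + M i 1 * p 1 := by
    intro p i
    rw [hf, Matrix.toEuclideanLin_apply]
    simp [Matrix.mulVec, dotProduct, Fin.sum_univ_two]
  have hset : {p : E2 | |u₀ * p 0 + u₁ * p 1 - s| < δ ∧ |w₀ * p 0 + w₁ * p 1 - t| < γ}
      = f ⁻¹' {q : E2 | q 0 ∈ Ioo (s - δ) (s + δ) ∧ q 1 ∈ Ioo (t - γ) (t + γ)} := by
    have e00 : M 0 0 = u₀ := rfl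
    have e01 : M 0 1 = u₁ := rfl
    have e10 : M 1 0 = w₀ := rfl
    have e11 : M 1 1 = w₁ := rfl
    ext p
    simp only [mem_setOf_eq, Set.mem_preimage, happ p 0, happ p 1, e00, e01, e10, e11,
      Set.mem_Ioo, abs_lt]
    constructor
    · rintro ⟨⟨h1, h2⟩, h3, h4⟩
      exact ⟨⟨by linarith, by linarith⟩, by linarith, by linarith⟩
    · rintro ⟨⟨h1, h2⟩, h3, h4⟩
      exact ⟨⟨by linarith, by linarith⟩, by linarith, by linarith⟩
  rw [hset, Measure.addHaar_preimage_linearMap volume (by rw [hdet]; exact hD), box_vol]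
  rw [hdet]
  have h1 : (s + δ - (s - δ)) = 2 * δ := by ring
  have h2 : (t + γ - (t - γ)) = 2 * γ := by ring
  rw [h1, h2]
  apply le_of_eq
  rw [abs_inv, ← ENNReal.ofReal_mul (by positivity), ← ENNReal.ofReal_mul (by positivity)]
  congr 1
  field_simp

lemma cs2 (u₀ u₁ d₀ d₁ : ℝ) :
    |u₀ * d₀ + u₁ * d₁| ≤ Real.sqrt (u₀ ^ 2 + u₁ ^ 2) * Real.sqrt (d₀ ^ 2 + d₁ ^ 2) := by
  have hA := Real.sq_sqrt (by positivity : (0:ℝ) ≤ u₀ ^ 2 + u₁ ^ 2)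
  have hB := Real.sq_sqrt (by positivity : (0:ℝ) ≤ d₀ ^ 2 + d₁ ^ 2)
  have hA0 := Real.sqrt_nonneg (u₀ ^ 2 + u₁ ^ 2)
  have hB0 := Real.sqrt_nonneg (d₀ ^ 2 + d₁ ^ 2)
  have h : (u₀ * d₀ + u₁ * d₁) ^ 2 ≤
      (Real.sqrt (u₀ ^ 2 + u₁ ^ 2) * Real.sqrt (d₀ ^ 2 + d₁ ^ 2)) ^ 2 := by
    have e : (Real.sqrt (u₀ ^ 2 + u₁ ^ 2) * Real.sqrt (d₀ ^ 2 + d₁ ^ 2)) ^ 2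
        = (u₀ ^ 2 + u₁ ^ 2) * (d₀ ^ 2 + d₁ ^ 2) := by
      rw [mul_pow, hA, hB]
    rw [e]
    nlinarith [sq_nonneg (u₀ * d₁ - u₁ * d₀)]
  calc |u₀ * d₀ + u₁ * d₁| = Real.sqrt ((u₀ * d₀ + u₁ * d₁) ^ 2) := (Real.sqrt_sq_eq_abs _).symm
    _ ≤ Real.sqrt ((Real.sqrt (u₀ ^ 2 + u₁ ^ 2) * Real.sqrt (d₀ ^ 2 + d₁ ^ 2)) ^ 2) :=
        Real.sqrt_le_sqrt h
    _ = _ := Real.sqrt_sq (by positivity)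

lemma count_sq (c0 A L : ℝ) (hc0 : 0 < c0) (c : ℕ)
    (h1 : c0 ≤ (c : ℝ)) (h2 : A ≤ (c : ℝ) ^ 2) (h3 : (c : ℝ) ^ 2 ≤ A + L) :
    c ∈ Finset.Icc (⌈Real.sqrt (max A 0)⌉₊) (⌈Real.sqrt (max A 0)⌉₊ + ⌊L / c0⌋₊) := by
  set m := ⌈Real.sqrt (max A 0)⌉₊ with hm
  have hmax : (0:ℝ) ≤ max A 0 := le_max_right _ _
  have hmc : m ≤ c := by
    rw [hm, Nat.ceil_le]
    have : Real.sqrt (max A 0) ≤ Real.sqrt ((c:ℝ)^2) := by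
      apply Real.sqrt_le_sqrt
      exact max_le h2 (by positivity)
    rwa [Real.sqrt_sq (by positivity)] at this
  have hm2 : A ≤ (m : ℝ) ^ 2 := by
    have h1' : Real.sqrt (max A 0) ≤ (m : ℝ) := Nat.le_ceil _
    have : max A 0 ≤ (m:ℝ)^2 := by
      nlinarith [Real.sqrt_nonneg (max A 0), Real.sq_sqrt hmax]
    exact le_trans (le_max_left _ _) this
  refine Finset.mem_Icc.2 ⟨hmc, ?_⟩
  have key : ((c - m : ℕ) : ℝ) ≤ L / c0 := by
    rw [Nat.cast_sub hmc]
    have hcm0 : (0:ℝ) ≤ (c:ℝ) - m := by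
      have : (m:ℝ) ≤ (c:ℝ) := Nat.cast_le.2 hmc; linarith
    have hL' : ((c:ℝ) - m) * c0 ≤ L := by
      have h4 : ((c:ℝ) - m) * c0 ≤ ((c:ℝ) - m) * ((c:ℝ) + m) := by
        apply mul_le_mul_of_nonneg_left _ hcm0
        have : (0:ℝ) ≤ (m:ℝ) := Nat.cast_nonneg m
        linarith
      nlinarith
    rw [le_div_iff₀ hc0]
    exact hL'
  have : c - m ≤ ⌊L / c0⌋₊ := Nat.le_floor key
  omega

lemma sin_ang (a b a' b' : ℕ) :
    Real.sin (ang a b a' b') * (‖vSq a b‖ * ‖vSq a' b'‖) =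
      |(a:ℝ)^2 * (b':ℝ)^2 - (b:ℝ)^2 * (a':ℝ)^2| := by
  rw [ang, InnerProductGeometry.sin_angle_mul_norm_mul_norm]
  have e : ∀ (x y : EuclideanSpace ℝ (Fin 2)),
      (inner ℝ x y : ℝ) = x 0 * y 0 + x 1 * y 1 := by
    intro x y
    rw [PiLp.inner_apply]
    simp [Fin.sum_univ_two]
    ring
  rw [e, e, e]
  have v0 : (vSq a b) 0 = (a:ℝ)^2 := rfl
  have v1 : (vSq a b) 1 = (b:ℝ)^2 := rfl
  have w0 : (vSq a' b') 0 = (a':ℝ)^2 := rfl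
  have w1 : (vSq a' b') 1 = (b':ℝ)^2 := rfl
  rw [v0, v1, w0, w1]
  rw [show ((a:ℝ)^2 * (a:ℝ)^2 + (b:ℝ)^2 * (b:ℝ)^2) * ((a':ℝ)^2 * (a':ℝ)^2 + (b':ℝ)^2 * (b':ℝ)^2)
      - ((a:ℝ)^2 * (a':ℝ)^2 + (b:ℝ)^2 * (b':ℝ)^2) * ((a:ℝ)^2 * (a':ℝ)^2 + (b:ℝ)^2 * (b':ℝ)^2)
      = ((a:ℝ)^2 * (b':ℝ)^2 - (b:ℝ)^2 * (a':ℝ)^2)^2 by ring]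
  exact Real.sqrt_sq_eq_abs _

lemma norm_vSq_sq (a b : ℕ) : ‖vSq a b‖ = Real.sqrt (((a:ℝ)^2)^2 + ((b:ℝ)^2)^2) := by
  rw [EuclideanSpace.norm_eq]
  congr 1
  rw [Fin.sum_univ_two]
  have v0 : (vSq a b) 0 = (a:ℝ)^2 := rfl
  have v1 : (vSq a b) 1 = (b:ℝ)^2 := rfl
  rw [v0, v1]
  rw [show ‖(a:ℝ)^2‖ = (a:ℝ)^2 from abs_of_nonneg (by positivity),
    show ‖(b:ℝ)^2‖ = (b:ℝ)^2 from abs_of_nonneg (by positivity)]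

lemma cross_ne_nat (a b a' b' : ℕ) (h : Nat.gcd a b = 1) (h' : Nat.gcd a' b' = 1)
    (hne : (a, b) ≠ (a', b')) : a ^ 2 * b' ^ 2 ≠ b ^ 2 * a' ^ 2 := by
  intro heq
  have ca : Nat.Coprime (a ^ 2) (b ^ 2) := Nat.Coprime.pow _ _ (Nat.coprime_iff_gcd_eq_one.2 h)
  have ca' : Nat.Coprime (a' ^ 2) (b' ^ 2) := Nat.Coprime.pow _ _ (Nat.coprime_iff_gcd_eq_one.2 h')
  have d1 : a ^ 2 ∣ a' ^ 2 := by
    have : a ^ 2 ∣ b ^ 2 * a' ^ 2 := ⟨b' ^ 2, by linarith [heq]⟩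
    exact (Nat.Coprime.dvd_of_dvd_mul_left ca this)
  have d2 : a' ^ 2 ∣ a ^ 2 := by
    have : a' ^ 2 ∣ b' ^ 2 * a ^ 2 := ⟨b ^ 2, by linarith [heq]⟩
    exact (Nat.Coprime.dvd_of_dvd_mul_left ca' this)
  have haa : a ^ 2 = a' ^ 2 := Nat.dvd_antisymm d1 d2
  have ha : a = a' := Nat.pow_left_injective (by norm_num) haa
  subst ha
  by_cases h0 : a = 0
  · subst h0
    simp at h h'
    exact hne (by simp [h, h'])
  · have hap : 0 < a ^ 2 := Nat.pow_pos (Nat.pos_of_ne_zero h0)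
    have hb2 : b ^ 2 = b' ^ 2 := by
      exact Nat.eq_of_mul_eq_mul_left hap (by linarith [heq])
    have hb : b = b' := Nat.pow_left_injective (by norm_num) hb2
    exact hne (by simp [hb])

lemma cross_ge_one (a b a' b' : ℕ) (h : Nat.gcd a b = 1) (h' : Nat.gcd a' b' = 1)
    (hne : (a, b) ≠ (a', b')) :
    (1 : ℝ) ≤ |(a:ℝ)^2 * (b':ℝ)^2 - (b:ℝ)^2 * (a':ℝ)^2| := by
  have hz : ((a:ℤ)^2 * (b':ℤ)^2 - (b:ℤ)^2 * (a':ℤ)^2) ≠ 0 := by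
    intro h0
    apply cross_ne_nat a b a' b' h h' hne
    have : ((a^2 * b'^2 : ℕ) : ℤ) = ((b^2 * a'^2 : ℕ) : ℤ) := by push_cast; linarith
    exact_mod_cast this
  have h1 : (1:ℤ) ≤ |(a:ℤ)^2 * (b':ℤ)^2 - (b:ℤ)^2 * (a':ℤ)^2| := Int.one_le_abs hz
  have h2 : ((1:ℤ):ℝ) ≤ (|(a:ℤ)^2 * (b':ℤ)^2 - (b:ℤ)^2 * (a':ℤ)^2| : ℝ) := by exact_mod_cast h1
  push_cast at h2
  convert h2 using 2

lemma ball_vol_lb (x₀ : E2) (r : ℝ) (hr : 0 < r) :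
    ENNReal.ofReal (r ^ 2) ≤ volume (Metric.ball x₀ r) := by
  have hsub : {p : E2 | p 0 ∈ Ioo (x₀ 0 - r/2) (x₀ 0 + r/2) ∧ p 1 ∈ Ioo (x₀ 1 - r/2) (x₀ 1 + r/2)}
      ⊆ Metric.ball x₀ r := by
    rintro p ⟨⟨h1, h2⟩, h3, h4⟩
    rw [Metric.mem_ball, EuclideanSpace.dist_eq]
    have e : ∑ i, dist (p i) (x₀ i) ^ 2 = (p 0 - x₀ 0) ^ 2 + (p 1 - x₀ 1) ^ 2 := by
      rw [Fin.sum_univ_two, Real.dist_eq, Real.dist_eq, sq_abs, sq_abs]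
    rw [e]
    have h5 : (p 0 - x₀ 0) ^ 2 + (p 1 - x₀ 1) ^ 2 < r ^ 2 := by nlinarith
    calc Real.sqrt ((p 0 - x₀ 0) ^ 2 + (p 1 - x₀ 1) ^ 2) < Real.sqrt (r ^ 2) :=
          Real.sqrt_lt_sqrt (by positivity) h5
      _ = r := Real.sqrt_sq hr.le
  calc ENNReal.ofReal (r ^ 2) = ENNReal.ofReal (x₀ 0 + r/2 - (x₀ 0 - r/2)) *
        ENNReal.ofReal (x₀ 1 + r/2 - (x₀ 1 - r/2)) := by
        rw [show x₀ 0 + r/2 - (x₀ 0 - r/2) = r by ring, show x₀ 1 + r/2 - (x₀ 1 - r/2) = r by ring,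
          ← ENNReal.ofReal_mul hr.le, sq]
    _ = volume {p : E2 | p 0 ∈ Ioo (x₀ 0 - r/2) (x₀ 0 + r/2) ∧ p 1 ∈ Ioo (x₀ 1 - r/2) (x₀ 1 + r/2)} :=
        (box_vol _ _ _ _).symm
    _ ≤ volume (Metric.ball x₀ r) := measure_mono hsub

lemma dist_coord (p q : E2) : dist p q = Real.sqrt ((p 0 - q 0) ^ 2 + (p 1 - q 1) ^ 2) := by
  rw [EuclideanSpace.dist_eq]
  congr 1
  rw [Fin.sum_univ_two, Real.dist_eq, Real.dist_eq, sq_abs, sq_abs]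

end Aux

set_option maxHeartbeats 2000000 in
/-- **Pairwise intersections.** Fix `ε ∈ (0,1)`. There is `C > 0`, depending only on `ε`,
such that for every ball `B ⊆ [ε,1]²` of radius `r` and all distinct coprime pairs
`(a,b) ≠ (a',b')` with `h := h_{a,b} ≥ h' := h_{a',b'}` both sufficiently large,
`|σ_{a,b} ∩ σ_{a',b'} ∩ B| ≤ C |B| (ψ(h)/h)(ψ(h')/h')(1 + 1/(r h sin α))`. -/
theorem volume_pairwise_intersection
    (ε : ℝ) (hε : ε ∈ Set.Ioo (0 : ℝ) 1) :
    ∃ C : ℝ, 0 < C ∧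
      ∀ ψ : ℝ → ℝ,
        (∀ x : ℝ, 0 < x → 0 < ψ x) →
        AntitoneOn ψ (Set.Ioi 0) →
        Tendsto ψ atTop (nhds 0) →
        ∀ (x₀ : EuclideanSpace ℝ (Fin 2)) (r : ℝ), 0 < r →
          Metric.ball x₀ r ⊆ unitSq ε →
          ∃ H₀ : ℕ, ∀ a b a' b' : ℕ, (a, b) ≠ (a', b') →
            Nat.gcd a b = 1 → Nat.gcd a' b' = 1 →
            max a' b' ≤ max a b → H₀ ≤ max a' b' →
            volume (sigU ψ a b ∩ sigU ψ a' b' ∩ Metric.ball x₀ r) ≤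
              ENNReal.ofReal (C * (ψ ((max a b : ℕ) : ℝ) / ((max a b : ℕ) : ℝ)) *
                  (ψ ((max a' b' : ℕ) : ℝ) / ((max a' b' : ℕ) : ℝ)) *
                  (1 + 1 / (r * ((max a b : ℕ) : ℝ) * Real.sin (ang a b a' b')))) *
                volume (Metric.ball x₀ r) := by
  obtain ⟨hε0, hε1⟩ := hε
  set sε := Real.sqrt ε with hsεdef
  have hsε0 : 0 < sε := Real.sqrt_pos.2 hε0
  have hsε1 : sε ≤ 1 := by
    rw [hsεdef, show (1:ℝ) = Real.sqrt 1 by simp]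
    exact Real.sqrt_le_sqrt hε1.le
  have hsε2 : sε ^ 2 = ε := Real.sq_sqrt hε0.le
  refine ⟨1000 / ε, by positivity, ?_⟩
  intro ψ hψpos hψanti hψtend x₀ r hr hB
  set m := min (min 1 (ε/2)) (min r (sε/4)) with hmdef
  clear_value m
  have hm : 0 < m := by
    rw [hmdef]
    exact lt_min (lt_min one_pos (by positivity)) (lt_min hr (by positivity))
  have hm1 : m ≤ 1 := by
    rw [hmdef]; exact le_trans (min_le_left _ _) (min_le_left _ _)
  have hmε2 : m ≤ ε/2 := by
    rw [hmdef]; exact le_trans (min_le_left _ _) (min_le_right _ _)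
  have hmr : m ≤ r := by
    rw [hmdef]; exact le_trans (min_le_right _ _) (min_le_left _ _)
  have hmsε : m ≤ sε/4 := by
    rw [hmdef]; exact le_trans (min_le_right _ _) (min_le_right _ _)
  have hev : ∀ᶠ x in atTop, ψ x < m := hψtend.eventually (gt_mem_nhds hm)
  obtain ⟨x₁, hx₁⟩ := eventually_atTop.1 hev
  refine ⟨⌈max x₁ (1/r)⌉₊ + 1, ?_⟩
  intro a b a' b' hne hg hg' hle hH0
  -- real abbreviations
  set H : ℝ := ((max a b : ℕ) : ℝ) with hHdef
  set H' : ℝ := ((max a' b' : ℕ) : ℝ) with hH'def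
  have hH0cast : ((⌈max x₁ (1/r)⌉₊ + 1 : ℕ) : ℝ) ≤ H' := by
    rw [hH'def]; exact_mod_cast hH0
  clear_value H H'
  have hH'1 : (1:ℝ) ≤ H' := by
    have h1 : (1:ℕ) ≤ ⌈max x₁ (1/r)⌉₊ + 1 := by omega
    exact le_trans (by exact_mod_cast h1) hH0cast
  have hceil : max x₁ (1/r) ≤ ((⌈max x₁ (1/r)⌉₊ + 1 : ℕ) : ℝ) := by
    have := Nat.le_ceil (max x₁ (1/r))
    push_cast
    linarith only [this]
  have hx₁H' : x₁ ≤ H' := le_trans (le_trans (le_max_left _ _) hceil) hH0cast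
  have hrinvH' : 1/r ≤ H' := le_trans (le_trans (le_max_right _ _) hceil) hH0cast
  have hrH' : 1 ≤ r * H' := by
    rw [div_le_iff₀ hr] at hrinvH'
    linarith only [hrinvH']
  have hH'H : H' ≤ H := by rw [hHdef, hH'def]; exact_mod_cast hle
  have hH1 : (1:ℝ) ≤ H := le_trans hH'1 hH'H
  have hH0R : (0:ℝ) < H := by linarith only [hH1]
  have hH'0 : (0:ℝ) < H' := by linarith only [hH'1]
  set ψ₁ := ψ H with hψ₁def
  set ψ₂ := ψ H' with hψ₂def
  clear_value ψ₁ ψ₂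
  have hψ₁0 : 0 < ψ₁ := by rw [hψ₁def]; exact hψpos H hH0R
  have hψ₂0 : 0 < ψ₂ := by rw [hψ₂def]; exact hψpos H' hH'0
  have hψ₂m : ψ₂ < m := by rw [hψ₂def]; exact hx₁ H' hx₁H'
  have hψ₁m : ψ₁ < m := by
    rw [hψ₁def]; exact hx₁ H (by linarith only [hx₁H', hH'H])
  have hψ12 : ψ₁ ≤ ψ₂ := by
    rw [hψ₁def, hψ₂def]; exact hψanti (mem_Ioi.2 hH'0) (mem_Ioi.2 hH0R) hH'H
  -- coordinates of the two lattice directions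
  set u₀ : ℝ := (a:ℝ)^2 with hu₀def
  set u₁ : ℝ := (b:ℝ)^2 with hu₁def
  set v₀ : ℝ := (a':ℝ)^2 with hv₀def
  set v₁ : ℝ := (b':ℝ)^2 with hv₁def
  clear_value u₀ u₁ v₀ v₁
  have hu₀0 : 0 ≤ u₀ := by rw [hu₀def]; positivity
  have hu₁0 : 0 ≤ u₁ := by rw [hu₁def]; positivity
  have hv₀0 : 0 ≤ v₀ := by rw [hv₀def]; positivity
  have hv₁0 : 0 ≤ v₁ := by rw [hv₁def]; positivity
  have hcase : H^2 = u₀ ∨ H^2 = u₁ := by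
    rcases max_choice a b with hc | hc
    · left; rw [hHdef, hc, hu₀def]
    · right; rw [hHdef, hc, hu₁def]
  have hcase' : H'^2 = v₀ ∨ H'^2 = v₁ := by
    rcases max_choice a' b' with hc | hc
    · left; rw [hH'def, hc, hv₀def]
    · right; rw [hH'def, hc, hv₁def]
  have hu₀H : u₀ ≤ H^2 := by
    have h1 : (a:ℝ) ≤ H := by rw [hHdef]; exact_mod_cast le_max_left a b
    have h2 : (0:ℝ) ≤ (a:ℝ) := Nat.cast_nonneg a
    rw [hu₀def]; nlinarith only [h1, h2]
  have hu₁H : u₁ ≤ H^2 := by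
    have h1 : (b:ℝ) ≤ H := by rw [hHdef]; exact_mod_cast le_max_right a b
    have h2 : (0:ℝ) ≤ (b:ℝ) := Nat.cast_nonneg b
    rw [hu₁def]; nlinarith only [h1, h2]
  have hv₀H : v₀ ≤ H'^2 := by
    have h1 : (a':ℝ) ≤ H' := by rw [hH'def]; exact_mod_cast le_max_left a' b'
    have h2 : (0:ℝ) ≤ (a':ℝ) := Nat.cast_nonneg a'
    rw [hv₀def]; nlinarith only [h1, h2]
  have hv₁H : v₁ ≤ H'^2 := by
    have h1 : (b':ℝ) ≤ H' := by rw [hH'def]; exact_mod_cast le_max_right a' b'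
    have h2 : (0:ℝ) ≤ (b':ℝ) := Nat.cast_nonneg b'
    rw [hv₁def]; nlinarith only [h1, h2]
  have hsum : H^2 ≤ u₀ + u₁ := by
    rcases hcase with hc | hc <;> linarith only [hu₀0, hu₁0, hc]
  have hsum' : H'^2 ≤ v₀ + v₁ := by
    rcases hcase' with hc | hc <;> linarith only [hv₀0, hv₁0, hc]
  have hHsq1 : (1:ℝ) ≤ H^2 := by nlinarith only [hH1]
  have hH'sq1 : (1:ℝ) ≤ H'^2 := by nlinarith only [hH'1]
  -- norms
  set N : ℝ := u₀^2 + u₁^2 with hNdef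
  set N' : ℝ := v₀^2 + v₁^2 with hN'def
  clear_value N N'
  have hN4 : (H^2)^2 ≤ N := by
    rcases hcase with hc | hc <;> (rw [hNdef, ← hc]; nlinarith only [sq_nonneg u₀, sq_nonneg u₁])
  have hN'4 : (H'^2)^2 ≤ N' := by
    rcases hcase' with hc | hc <;> (rw [hN'def, ← hc]; nlinarith only [sq_nonneg v₀, sq_nonneg v₁])
  have hN0 : 0 < N := by nlinarith only [hN4, hHsq1]
  have hN'0 : 0 < N' := by nlinarith only [hN'4, hH'sq1]
  set SN := Real.sqrt N with hSNdef
  set SN' := Real.sqrt N' with hSN'def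
  clear_value SN SN'
  have hSN0 : 0 < SN := by rw [hSNdef]; exact Real.sqrt_pos.2 hN0
  have hSN'0 : 0 < SN' := by rw [hSN'def]; exact Real.sqrt_pos.2 hN'0
  have hSNsq : SN^2 = N := by rw [hSNdef]; exact Real.sq_sqrt hN0.le
  have hSN'sq : SN'^2 = N' := by rw [hSN'def]; exact Real.sq_sqrt hN'0.le
  have hSNl : H^2 ≤ SN := by
    rw [hSNdef]
    calc H^2 = Real.sqrt ((H^2)^2) := (Real.sqrt_sq (by positivity)).symm
      _ ≤ Real.sqrt N := Real.sqrt_le_sqrt hN4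
  have hSN'l : H'^2 ≤ SN' := by
    rw [hSN'def]
    calc H'^2 = Real.sqrt ((H'^2)^2) := (Real.sqrt_sq (by positivity)).symm
      _ ≤ Real.sqrt N' := Real.sqrt_le_sqrt hN'4
  have hSNu : SN ≤ 2*H^2 := by
    have e1 : u₀^2 ≤ (H^2)^2 := pow_le_pow_left₀ hu₀0 hu₀H 2
    have e2 : u₁^2 ≤ (H^2)^2 := pow_le_pow_left₀ hu₁0 hu₁H 2
    have h4 : N ≤ (2*H^2)^2 := by rw [hNdef]; nlinarith only [e1, e2, sq_nonneg H]
    rw [hSNdef]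
    calc Real.sqrt N ≤ Real.sqrt ((2*H^2)^2) := Real.sqrt_le_sqrt h4
      _ = 2*H^2 := Real.sqrt_sq (by positivity)
  have hSN'u : SN' ≤ 2*H'^2 := by
    have e1 : v₀^2 ≤ (H'^2)^2 := pow_le_pow_left₀ hv₀0 hv₀H 2
    have e2 : v₁^2 ≤ (H'^2)^2 := pow_le_pow_left₀ hv₁0 hv₁H 2
    have h4 : N' ≤ (2*H'^2)^2 := by rw [hN'def]; nlinarith only [e1, e2, sq_nonneg H']
    rw [hSN'def]
    calc Real.sqrt N' ≤ Real.sqrt ((2*H'^2)^2) := Real.sqrt_le_sqrt h4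
      _ = 2*H'^2 := Real.sqrt_sq (by positivity)
  -- determinant
  set Dr : ℝ := u₀ * v₁ - u₁ * v₀ with hDrdef
  set Dd : ℝ := |Dr| with hDddef
  clear_value Dr Dd
  have hD1 : 1 ≤ Dd := by
    have h1 := cross_ge_one a b a' b' hg hg' hne
    rw [← hu₀def, ← hu₁def, ← hv₀def, ← hv₁def, ← hDrdef, ← hDddef] at h1
    exact h1
  have hDd0 : (0:ℝ) < Dd := lt_of_lt_of_le zero_lt_one hD1
  have hsin : Real.sin (ang a b a' b') = Dd / (SN * SN') := by
    have h1 := sin_ang a b a' b'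
    have hn1 : ‖vSq a b‖ = SN := by
      rw [norm_vSq_sq, ← hu₀def, ← hu₁def, ← hNdef, ← hSNdef]
    have hn2 : ‖vSq a' b'‖ = SN' := by
      rw [norm_vSq_sq, ← hv₀def, ← hv₁def, ← hN'def, ← hSN'def]
    rw [hn1, hn2, ← hu₀def, ← hu₁def, ← hv₀def, ← hv₁def, ← hDrdef, ← hDddef] at h1
    rw [eq_div_iff (by positivity)]
    exact h1
  have hsin0 : 0 < Real.sin (ang a b a' b') := by rw [hsin]; positivity
  -- the orthogonal decomposition
  set lam := (u₀ * v₀ + u₁ * v₁) / N' with hlamdef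
  set w₀ : ℝ := u₀ - lam * v₀ with hw₀def
  set w₁ : ℝ := u₁ - lam * v₁ with hw₁def
  set Q0 : ℝ := w₀^2 + w₁^2 with hQ0def
  set Q := Real.sqrt Q0 with hQdef
  clear_value lam w₀ w₁ Q0 Q
  have hQ00 : 0 ≤ Q0 := by rw [hQ0def]; positivity
  have hQnn : 0 ≤ Q := by rw [hQdef]; exact Real.sqrt_nonneg _
  have hQid : Q0 * N' = Dr^2 := by
    have hNe : v₀^2 + v₁^2 ≠ 0 := by rw [← hN'def]; exact hN'0.ne'
    rw [hQ0def, hw₀def, hw₁def, hlamdef, hDrdef, hN'def]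
    field_simp
    ring
  have hQSN' : Q * SN' = Dd := by
    rw [hQdef, hSN'def, ← Real.sqrt_mul hQ00, hQid, Real.sqrt_sq_eq_abs, ← hDddef]
  have hQpos : 0 < Q := by
    rcases lt_or_ge 0 Q with hq | hq
    · exact hq
    · exfalso; nlinarith only [hq, hSN'0, hQSN', hD1]
  have hlamb : |lam| ≤ SN / SN' := by
    have hcs := cs2 u₀ u₁ v₀ v₁
    rw [← hNdef, ← hSNdef, ← hN'def, ← hSN'def] at hcs
    rw [hlamdef, abs_div, abs_of_pos hN'0, div_le_div_iff₀ hN'0 hSN'0]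
    nlinarith only [hcs, hSN'0, hSN'sq, abs_nonneg (u₀*v₀ + u₁*v₁)]
  have hlam0 : 0 ≤ |lam| := abs_nonneg lam
  -- count scales
  set c₀ : ℝ := sε * H / 2 with hc₀def
  set c₀' : ℝ := sε * H' / 2 with hc₀'def
  clear_value c₀ c₀'
  have hc₀0 : 0 < c₀ := by rw [hc₀def]; positivity
  have hc₀'0 : 0 < c₀' := by rw [hc₀'def]; positivity
  -- points of the ball
  have hball : ∀ p : EuclideanSpace ℝ (Fin 2), p ∈ Metric.ball x₀ r →
      (ε ≤ p 0 ∧ p 0 ≤ 1) ∧ (ε ≤ p 1 ∧ p 1 ≤ 1) ∧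
      Real.sqrt ((p 0 - x₀ 0)^2 + (p 1 - x₀ 1)^2) < r := by
    intro p hp
    obtain ⟨h1, h2⟩ := hB hp
    have hd : dist p x₀ < r := Metric.mem_ball.1 hp
    rw [dist_coord] at hd
    exact ⟨⟨h1.1, h1.2⟩, ⟨h2.1, h2.2⟩, hd⟩
  -- outer count
  set A₂ : ℝ := (v₀ * x₀ 0 + v₁ * x₀ 1) - (SN' * r + ψ₂) with hA₂def
  set L₂ : ℝ := 2 * (SN' * r + ψ₂) with hL₂def
  clear_value A₂ L₂
  have hL₂0 : 0 ≤ L₂ := by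
    rw [hL₂def]; positivity
  set m₂ := ⌈Real.sqrt (max A₂ 0)⌉₊ with hm₂def
  set K₂ := ⌊L₂ / c₀'⌋₊ with hK₂def
  clear_value m₂ K₂
  have mem₂ : ∀ c' : ℕ, (sigC ψ a' b' c' ∩ Metric.ball x₀ r).Nonempty →
      c' ∈ Finset.Icc m₂ (m₂ + K₂) := by
    rintro c' ⟨p, hp1, hp2⟩
    obtain ⟨⟨he0, hle0⟩, ⟨he1, hle1⟩, hd⟩ := hball p hp2
    obtain ⟨hq0, hq1, habs⟩ := hp1
    rw [← hv₀def, ← hv₁def, ← hH'def, ← hψ₂def, abs_lt] at habs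
    have hcs := cs2 v₀ v₁ (p 0 - x₀ 0) (p 1 - x₀ 1)
    rw [← hN'def, ← hSN'def] at hcs
    have hcs' : |v₀ * (p 0 - x₀ 0) + v₁ * (p 1 - x₀ 1)| ≤ SN' * r :=
      le_trans hcs (mul_le_mul_of_nonneg_left hd.le hSN'0.le)
    rw [abs_le] at hcs'
    have hexp : v₀ * p 0 + v₁ * p 1 =
        (v₀ * x₀ 0 + v₁ * x₀ 1) + (v₀ * (p 0 - x₀ 0) + v₁ * (p 1 - x₀ 1)) := by ring
    have hlow : ε * H'^2 ≤ v₀ * p 0 + v₁ * p 1 := by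
      have l1 : v₀ * ε ≤ v₀ * p 0 := mul_le_mul_of_nonneg_left he0 hv₀0
      have l2 : v₁ * ε ≤ v₁ * p 1 := mul_le_mul_of_nonneg_left he1 hv₁0
      have l3 : ε * H'^2 ≤ ε * (v₀ + v₁) := mul_le_mul_of_nonneg_left hsum' hε0.le
      linarith only [l1, l2, l3]
    have hc'sq : c₀'^2 ≤ (c':ℝ)^2 := by
      have e : c₀'^2 = ε * H'^2/4 := by rw [hc₀'def, ← hsε2]; ring
      have l4 : ε ≤ ε * H'^2 := by nlinarith only [hε0, hH'sq1]
      rw [e]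
      linarith only [habs.2, hlow, hψ₂m, hmε2, l4, hε0]
    have hc'0 : c₀' ≤ (c':ℝ) := by
      nlinarith only [hc'sq, hc₀'0, (Nat.cast_nonneg c' : (0:ℝ) ≤ (c':ℝ))]
    have hA2le : A₂ ≤ (c':ℝ)^2 := by
      rw [hA₂def]; linarith only [habs.2, hcs'.1, hexp]
    have hA2ge : (c':ℝ)^2 ≤ A₂ + L₂ := by
      rw [hA₂def, hL₂def]; linarith only [habs.1, hcs'.2, hexp]
    have := count_sq c₀' A₂ L₂ hc₀'0 c' hc'0 hA2le hA2ge
    rwa [← hm₂def, ← hK₂def] at this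
  -- inner count
  set L₁ : ℝ := 2 * (Q*r + |lam| * ψ₂ + ψ₁) with hL₁def
  clear_value L₁
  have hL₁0 : 0 ≤ L₁ := by rw [hL₁def]; positivity
  set K₁ := ⌊L₁ / c₀⌋₊ with hK₁def
  clear_value K₁
  set A₁ : ℕ → ℝ := fun c' =>
      (lam * (c':ℝ)^2 + (w₀ * x₀ 0 + w₁ * x₀ 1)) - (Q*r + |lam| * ψ₂ + ψ₁) with hA₁def
  clear_value A₁
  have mem₁ : ∀ c c' : ℕ,
      (sigC ψ a b c ∩ sigC ψ a' b' c' ∩ Metric.ball x₀ r).Nonempty →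
      c ∈ Finset.Icc ⌈Real.sqrt (max (A₁ c') 0)⌉₊ (⌈Real.sqrt (max (A₁ c') 0)⌉₊ + K₁) := by
    rintro c c' ⟨p, ⟨hpc, hpc'⟩, hpB⟩
    obtain ⟨⟨he0, hle0⟩, ⟨he1, hle1⟩, hd⟩ := hball p hpB
    obtain ⟨_, _, habs1⟩ := hpc
    rw [← hu₀def, ← hu₁def, ← hHdef, ← hψ₁def, abs_lt] at habs1
    obtain ⟨_, _, habs2⟩ := hpc'
    rw [← hv₀def, ← hv₁def, ← hH'def, ← hψ₂def] at habs2
    have hid : u₀ * p 0 + u₁ * p 1 =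
        (w₀ * p 0 + w₁ * p 1) + lam * (v₀ * p 0 + v₁ * p 1) := by
      rw [hw₀def, hw₁def]; ring
    have hcsw := cs2 w₀ w₁ (p 0 - x₀ 0) (p 1 - x₀ 1)
    rw [← hQ0def, ← hQdef] at hcsw
    have hcsw' : |w₀ * (p 0 - x₀ 0) + w₁ * (p 1 - x₀ 1)| ≤ Q * r :=
      le_trans hcsw (mul_le_mul_of_nonneg_left hd.le hQnn)
    rw [abs_le] at hcsw'
    have hlm : |lam * (v₀ * p 0 + v₁ * p 1) - lam * (c':ℝ)^2| ≤ |lam| * ψ₂ := by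
      rw [← mul_sub, abs_mul]
      exact mul_le_mul_of_nonneg_left habs2.le (abs_nonneg lam)
    rw [abs_le] at hlm
    have hexpw : w₀ * p 0 + w₁ * p 1 =
        (w₀ * x₀ 0 + w₁ * x₀ 1) + (w₀ * (p 0 - x₀ 0) + w₁ * (p 1 - x₀ 1)) := by ring
    have hlow : ε * H^2 ≤ u₀ * p 0 + u₁ * p 1 := by
      have l1 : u₀ * ε ≤ u₀ * p 0 := mul_le_mul_of_nonneg_left he0 hu₀0
      have l2 : u₁ * ε ≤ u₁ * p 1 := mul_le_mul_of_nonneg_left he1 hu₁0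
      have l3 : ε * H^2 ≤ ε * (u₀ + u₁) := mul_le_mul_of_nonneg_left hsum hε0.le
      linarith only [l1, l2, l3]
    have hcsq : c₀^2 ≤ (c:ℝ)^2 := by
      have e : c₀^2 = ε * H^2/4 := by rw [hc₀def, ← hsε2]; ring
      have l4 : ε ≤ ε * H^2 := by nlinarith only [hε0, hHsq1]
      rw [e]
      linarith only [habs1.2, hlow, hψ₁m, hmε2, l4, hε0]
    have hc0c : c₀ ≤ (c:ℝ) := by
      nlinarith only [hcsq, hc₀0, (Nat.cast_nonneg c : (0:ℝ) ≤ (c:ℝ))]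
    have hA1le : A₁ c' ≤ (c:ℝ)^2 := by
      rw [hA₁def]
      simp only
      linarith only [habs1.2, hcsw'.1, hlm.1, hid, hexpw]
    have hA1ge : (c:ℝ)^2 ≤ A₁ c' + L₁ := by
      rw [hA₁def, hL₁def]
      simp only
      linarith only [habs1.1, hcsw'.2, hlm.2, hid, hexpw]
    have := count_sq c₀ (A₁ c') L₁ hc₀0 c hc0c hA1le hA1ge
    rwa [← hK₁def] at this
  -- per-pair volume bounds
  set Vpar : ℝ := 2*ψ₁*(2*ψ₂)/Dd with hVpardef
  set Vslab : ℝ := 2*ψ₁*(2*(SN*r))/N with hVslabdef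
  clear_value Vpar Vslab
  have hVpar0 : 0 ≤ Vpar := by rw [hVpardef]; positivity
  have hVslab0 : 0 ≤ Vslab := by rw [hVslabdef]; positivity
  have volT : ∀ c c' : ℕ,
      volume (sigC ψ a b c ∩ sigC ψ a' b' c' ∩ Metric.ball x₀ r) ≤
        ENNReal.ofReal (min Vpar Vslab) := by
    intro c c'
    rcases min_cases Vpar Vslab with ⟨hmin, _⟩ | ⟨hmin, _⟩ <;> rw [hmin]
    · -- parallelogram bound
      have hincl : sigC ψ a b c ∩ sigC ψ a' b' c' ∩ Metric.ball x₀ r ⊆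
          {p : E2 | |u₀ * p 0 + u₁ * p 1 - (c:ℝ)^2| < ψ₁ ∧
            |v₀ * p 0 + v₁ * p 1 - (c':ℝ)^2| < ψ₂} := by
        rintro p ⟨⟨hpc, hpc'⟩, _⟩
        obtain ⟨_, _, h1⟩ := hpc
        obtain ⟨_, _, h2⟩ := hpc'
        rw [← hu₀def, ← hu₁def, ← hHdef, ← hψ₁def] at h1
        rw [← hv₀def, ← hv₁def, ← hH'def, ← hψ₂def] at h2
        exact ⟨h1, h2⟩
      have hDne : u₀ * v₁ - u₁ * v₀ ≠ 0 := by
        rw [← hDrdef]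
        intro h0
        rw [hDddef, h0, abs_zero] at hDd0
        exact lt_irrefl 0 hDd0
      calc volume (sigC ψ a b c ∩ sigC ψ a' b' c' ∩ Metric.ball x₀ r)
          ≤ volume {p : E2 | |u₀ * p 0 + u₁ * p 1 - (c:ℝ)^2| < ψ₁ ∧
            |v₀ * p 0 + v₁ * p 1 - (c':ℝ)^2| < ψ₂} := measure_mono hincl
        _ ≤ ENNReal.ofReal (2*ψ₁*(2*ψ₂)/|u₀ * v₁ - u₁ * v₀|) :=
            strip_vol u₀ u₁ v₀ v₁ _ _ _ _ hψ₁0.le hψ₂0.le hDne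
        _ = ENNReal.ofReal Vpar := by rw [hVpardef, ← hDrdef, ← hDddef]
    · -- slab bound
      have hincl : sigC ψ a b c ∩ sigC ψ a' b' c' ∩ Metric.ball x₀ r ⊆
          {p : E2 | |u₀ * p 0 + u₁ * p 1 - (c:ℝ)^2| < ψ₁ ∧
            |(-u₁) * p 0 + u₀ * p 1 - ((-u₁) * x₀ 0 + u₀ * x₀ 1)| < SN * r} := by
        rintro p ⟨⟨hpc, _⟩, hpB⟩
        obtain ⟨_, _, h1⟩ := hpc
        rw [← hu₀def, ← hu₁def, ← hHdef, ← hψ₁def] at h1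
        obtain ⟨_, _, hd⟩ := hball p hpB
        refine ⟨h1, ?_⟩
        have hcs := cs2 (-u₁) u₀ (p 0 - x₀ 0) (p 1 - x₀ 1)
        have e : (-u₁)^2 + u₀^2 = N := by rw [hNdef]; ring
        rw [e, ← hSNdef] at hcs
        calc |(-u₁) * p 0 + u₀ * p 1 - ((-u₁) * x₀ 0 + u₀ * x₀ 1)|
            = |(-u₁) * (p 0 - x₀ 0) + u₀ * (p 1 - x₀ 1)| := by congr 1; ring
          _ ≤ SN * Real.sqrt ((p 0 - x₀ 0)^2 + (p 1 - x₀ 1)^2) := hcs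
          _ < SN * r := mul_lt_mul_of_pos_left hd hSN0
      have hDne2 : u₀ * u₀ - u₁ * (-u₁) ≠ 0 := by
        have e : u₀ * u₀ - u₁ * (-u₁) = N := by rw [hNdef]; ring
        rw [e]; exact hN0.ne'
      calc volume (sigC ψ a b c ∩ sigC ψ a' b' c' ∩ Metric.ball x₀ r)
          ≤ volume {p : E2 | |u₀ * p 0 + u₁ * p 1 - (c:ℝ)^2| < ψ₁ ∧
            |(-u₁) * p 0 + u₀ * p 1 - ((-u₁) * x₀ 0 + u₀ * x₀ 1)| < SN * r} := measure_mono hincl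
        _ ≤ ENNReal.ofReal (2*ψ₁*(2*(SN*r))/|u₀ * u₀ - u₁ * (-u₁)|) :=
            strip_vol u₀ u₁ (-u₁) u₀ _ _ _ _ hψ₁0.le (by positivity) hDne2
        _ = ENNReal.ofReal Vslab := by
            rw [hVslabdef]
            congr 1
            rw [show u₀ * u₀ - u₁ * (-u₁) = N by rw [hNdef]; ring, abs_of_pos hN0]
  -- counting bounds as real numbers
  have hK₁r : ((K₁:ℝ)) ≤ L₁ / c₀ := by
    rw [hK₁def]; exact Nat.floor_le (by positivity)
  have hsmall : 2*ψ₁/c₀ ≤ 1 := by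
    rw [div_le_one hc₀0, hc₀def]
    have h5 : sε ≤ sε * H := by nlinarith only [hsε0, hH1]
    linarith only [hψ₁m, hmsε, h5]
  set a₁r : ℝ := 2*Q*r/c₀ with ha₁def
  set a₂r : ℝ := 2*|lam| * ψ₂/c₀ with ha₂def
  clear_value a₁r a₂r
  have ha₁0 : 0 ≤ a₁r := by rw [ha₁def]; positivity
  have ha₂0 : 0 ≤ a₂r := by rw [ha₂def]; positivity
  have hcount1 : (K₁:ℝ) + 1 ≤ a₁r + a₂r + 2 := by
    have e : L₁ / c₀ = a₁r + a₂r + 2*ψ₁/c₀ := by rw [ha₁def, ha₂def, hL₁def]; ring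
    linarith only [hK₁r, hsmall, e]
  set E₁ : ℝ := a₁r * Vpar + a₂r * Vslab + 2 * Vpar with hE₁def
  clear_value E₁
  have hE₁0 : 0 ≤ E₁ := by
    rw [hE₁def]
    have := mul_nonneg ha₁0 hVpar0
    have := mul_nonneg ha₂0 hVslab0
    linarith only [mul_nonneg ha₁0 hVpar0, mul_nonneg ha₂0 hVslab0, hVpar0]
  have hminle : ((K₁:ℝ)+1) * min Vpar Vslab ≤ E₁ := by
    have hmin0 : 0 ≤ min Vpar Vslab := le_min hVpar0 hVslab0
    have h1 : ((K₁:ℝ)+1) * min Vpar Vslab ≤ (a₁r + a₂r + 2) * min Vpar Vslab :=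
      mul_le_mul_of_nonneg_right hcount1 hmin0
    have h2 : a₁r * min Vpar Vslab ≤ a₁r * Vpar :=
      mul_le_mul_of_nonneg_left (min_le_left _ _) ha₁0
    have h3 : a₂r * min Vpar Vslab ≤ a₂r * Vslab :=
      mul_le_mul_of_nonneg_left (min_le_right _ _) ha₂0
    have h4 : 2 * min Vpar Vslab ≤ 2 * Vpar :=
      mul_le_mul_of_nonneg_left (min_le_left _ _) (by norm_num)
    rw [hE₁def]
    nlinarith only [h1, h2, h3, h4]
  -- inner volume bound, for each strip of the second family
  have hinner : ∀ c' : ℕ,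
      volume (⋃ c : ℕ, sigC ψ a b c ∩ sigC ψ a' b' c' ∩ Metric.ball x₀ r) ≤
        ENNReal.ofReal E₁ := by
    intro c'
    have hzero : ∀ c ∉ Finset.Icc ⌈Real.sqrt (max (A₁ c') 0)⌉₊
        (⌈Real.sqrt (max (A₁ c') 0)⌉₊ + K₁),
        volume (sigC ψ a b c ∩ sigC ψ a' b' c' ∩ Metric.ball x₀ r) = 0 := by
      intro c hc
      have hemp : sigC ψ a b c ∩ sigC ψ a' b' c' ∩ Metric.ball x₀ r = ∅ := by
        rw [← Set.not_nonempty_iff_eq_empty]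
        intro hne2
        exact hc (mem₁ c c' hne2)
      rw [hemp, measure_empty]
    calc volume (⋃ c : ℕ, sigC ψ a b c ∩ sigC ψ a' b' c' ∩ Metric.ball x₀ r)
        ≤ ∑' c : ℕ, volume (sigC ψ a b c ∩ sigC ψ a' b' c' ∩ Metric.ball x₀ r) :=
          measure_iUnion_le _
      _ = ∑ c ∈ Finset.Icc ⌈Real.sqrt (max (A₁ c') 0)⌉₊
            (⌈Real.sqrt (max (A₁ c') 0)⌉₊ + K₁),
            volume (sigC ψ a b c ∩ sigC ψ a' b' c' ∩ Metric.ball x₀ r) := tsum_eq_sum hzero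
      _ ≤ (Finset.Icc ⌈Real.sqrt (max (A₁ c') 0)⌉₊
            (⌈Real.sqrt (max (A₁ c') 0)⌉₊ + K₁)).card • ENNReal.ofReal (min Vpar Vslab) :=
          Finset.sum_le_card_nsmul _ _ _ (fun c _ => volT c c')
      _ = (K₁ + 1) • ENNReal.ofReal (min Vpar Vslab) := by
          rw [Nat.card_Icc]
          congr 1
          omega
      _ ≤ ENNReal.ofReal E₁ := by
          have hcastK : ((K₁+1 : ℕ) : ENNReal) = ENNReal.ofReal ((K₁+1:ℕ):ℝ) :=
            (ENNReal.ofReal_natCast _).symm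
          rw [nsmul_eq_mul, hcastK, ← ENNReal.ofReal_mul (by positivity)]
          apply ENNReal.ofReal_le_ofReal
          push_cast
          exact hminle
  -- outer count bound
  have hK₂r : (K₂:ℝ) ≤ L₂ / c₀' := by
    rw [hK₂def]; exact Nat.floor_le (by positivity)
  set K₂r : ℝ := 13*(r*H'/sε) with hK₂rdef
  clear_value K₂r
  have hK₂r0 : 0 ≤ K₂r := by rw [hK₂rdef]; positivity
  have hcard₂ : (K₂:ℝ) + 1 ≤ K₂r := by
    have h1 : L₂ ≤ 6*r*H'^2 := by
      have e1 : SN'*r ≤ 2*H'^2*r := mul_le_mul_of_nonneg_right hSN'u hr.le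
      have e2 : r ≤ r*H'^2 := by nlinarith only [hr, hH'sq1]
      rw [hL₂def]; linarith only [e1, e2, hψ₂m, hmr]
    have h2old : L₂/c₀' ≤ 12*r*H'/sε := by
      rw [hc₀'def, div_le_div_iff₀ (by positivity) hsε0]
      nlinarith only [h1, hsε0, hL₂0]
    have h2 : L₂/c₀' ≤ 12*(r*H'/sε) := by
      rw [show 12*(r*H'/sε) = 12*r*H'/sε from by ring]
      exact h2old
    have h3 : 1 ≤ r*H'/sε := by
      rw [le_div_iff₀ hsε0]
      nlinarith only [hsε1, hrH']
    rw [hK₂rdef]; linarith only [hK₂r, h2, h3]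
  -- decomposition of the union
  have decomp : sigU ψ a b ∩ sigU ψ a' b' ∩ Metric.ball x₀ r =
      ⋃ c' : ℕ, ⋃ c : ℕ, sigC ψ a b c ∩ sigC ψ a' b' c' ∩ Metric.ball x₀ r := by
    ext p
    simp only [sigU, mem_inter_iff, mem_iUnion]
    tauto
  have hzero₂ : ∀ c' ∉ Finset.Icc m₂ (m₂+K₂),
      volume (⋃ c : ℕ, sigC ψ a b c ∩ sigC ψ a' b' c' ∩ Metric.ball x₀ r) = 0 := by
    intro c' hc'
    have hemp : sigC ψ a' b' c' ∩ Metric.ball x₀ r = ∅ := by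
      rw [← Set.not_nonempty_iff_eq_empty]
      intro hne2
      exact hc' (mem₂ c' hne2)
    have hsub : (⋃ c : ℕ, sigC ψ a b c ∩ sigC ψ a' b' c' ∩ Metric.ball x₀ r) ⊆
        sigC ψ a' b' c' ∩ Metric.ball x₀ r := by
      intro p hp
      rw [mem_iUnion] at hp
      obtain ⟨c, ⟨⟨_, h2⟩, h3⟩⟩ := hp
      exact ⟨h2, h3⟩
    exact measure_mono_null hsub (by rw [hemp]; exact measure_empty)
  -- the final real-number estimate
  have hfsne : sε ≠ 0 := hsε0.ne'
  have hfHne : H ≠ 0 := hH0R.ne'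
  have hfH'ne : H' ≠ 0 := hH'0.ne'
  have hfQne : Q ≠ 0 := hQpos.ne'
  have hfSNne : SN ≠ 0 := hSN0.ne'
  have hfSN'ne : SN' ≠ 0 := hSN'0.ne'
  have hfDdne : Dd ≠ 0 := hDd0.ne'
  have hfrne : r ≠ 0 := hr.ne'
  have hfεne : ε ≠ 0 := hε0.ne'
  have e₁ : a₁r * Vpar = 16*r*ψ₁*ψ₂/(sε*H*SN') := by
    rw [ha₁def, hVpardef, hc₀def, ← hQSN']
    field_simp
    ring
  have hnum : 2*|lam| * ψ₂ ≤ 2*(SN/SN')*ψ₂ := by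
    nlinarith only [hlamb, hψ₂0]
  have hb : a₂r ≤ 2*(SN/SN')*ψ₂/c₀ := by
    rw [ha₂def, div_le_div_iff₀ hc₀0 hc₀0]
    nlinarith only [hnum, hc₀0]
  have e₃ : (2*(SN/SN')*ψ₂/c₀)*Vslab = 16*r*ψ₁*ψ₂/(sε*H*SN') := by
    rw [hVslabdef, hc₀def, ← hSNsq]
    field_simp
    ring
  have b2 : a₂r * Vslab ≤ 16*r*ψ₁*ψ₂/(sε*H*SN') :=
    le_trans (mul_le_mul_of_nonneg_right hb hVslab0) (le_of_eq e₃)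
  have e₄ : (2:ℝ) * Vpar = 8*ψ₁*ψ₂/Dd := by rw [hVpardef]; ring
  have hXX : 16*r*ψ₁*ψ₂/(sε*H*SN') ≤ 16*r*ψ₁*ψ₂/(sε*H*H'^2) := by
    rw [div_le_div_iff₀ (by positivity) (by positivity)]
    have hden : sε*H*H'^2 ≤ sε*H*SN' := by
      have := mul_le_mul_of_nonneg_left hSN'l (by positivity : (0:ℝ) ≤ sε*H)
      linarith only [this]
    have hnum0 : (0:ℝ) ≤ 16*r*ψ₁*ψ₂ := by positivity
    nlinarith only [hden, hnum0]
  have hE₁b : E₁ ≤ 2*(16*r*ψ₁*ψ₂/(sε*H*H'^2)) + 8*ψ₁*ψ₂/Dd := by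
    rw [hE₁def]
    have t1 : a₁r*Vpar ≤ 16*r*ψ₁*ψ₂/(sε*H*H'^2) := le_trans (le_of_eq e₁) hXX
    have t2 : a₂r*Vslab ≤ 16*r*ψ₁*ψ₂/(sε*H*H'^2) := le_trans b2 hXX
    linarith only [t1, t2, e₄]
  have hfin1 : K₂r * E₁ ≤ K₂r * (2*(16*r*ψ₁*ψ₂/(sε*H*H'^2)) + 8*ψ₁*ψ₂/Dd) :=
    mul_le_mul_of_nonneg_left hE₁b hK₂r0
  have hfin2 : K₂r * (2*(16*r*ψ₁*ψ₂/(sε*H*H'^2)) + 8*ψ₁*ψ₂/Dd)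
      = 416*(r^2*ψ₁*ψ₂)/(sε^2*H*H') + 104*(r*H'*ψ₁*ψ₂)/(sε*Dd) := by
    rw [hK₂rdef]
    field_simp
    ring
  have hsplit : (1000/ε) * (ψ₁/H) * (ψ₂/H') * (1 + 1/(r*H*Real.sin (ang a b a' b'))) * r^2
      = 1000*(r^2*ψ₁*ψ₂)/(ε*H*H') + 1000*(ψ₁*ψ₂*SN*SN'*r)/(ε*H^2*H'*Dd) := by
    rw [hsin]
    field_simp
  have hT1 : 416*(r^2*ψ₁*ψ₂)/(sε^2*H*H') ≤ 1000*(r^2*ψ₁*ψ₂)/(ε*H*H') := by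
    rw [hsε2, div_le_div_iff₀ (by positivity) (by positivity)]
    have hpos : (0:ℝ) ≤ (r^2*ψ₁*ψ₂)*(ε*H*H') := by positivity
    nlinarith only [hpos]
  have hT2 : 104*(r*H'*ψ₁*ψ₂)/(sε*Dd) ≤ 1000*(ψ₁*ψ₂*SN*SN'*r)/(ε*H^2*H'*Dd) := by
    rw [div_le_div_iff₀ (by positivity) (by positivity)]
    have p0 : H^2*H'^2 ≤ SN*SN' := by
      have q1 : H^2*H'^2 ≤ SN*H'^2 := mul_le_mul_of_nonneg_right hSNl (by positivity)
      have q2 : SN*H'^2 ≤ SN*SN' := mul_le_mul_of_nonneg_left hSN'l hSN0.le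
      linarith only [q1, q2]
    have p1 : ε ≤ sε := by nlinarith only [hsε2, hsε1, hsε0]
    have p2 : ε*(H^2*H'^2) ≤ sε*(SN*SN') := by
      calc ε*(H^2*H'^2) ≤ ε*(SN*SN') := mul_le_mul_of_nonneg_left p0 hε0.le
        _ ≤ sε*(SN*SN') := mul_le_mul_of_nonneg_right p1 (by positivity)
    have hW : (0:ℝ) ≤ r*ψ₁*ψ₂*Dd := by positivity
    have keymul := mul_le_mul_of_nonneg_left p2 hW
    have hWS : (0:ℝ) ≤ (r*ψ₁*ψ₂*Dd)*(sε*(SN*SN')) := by positivity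
    nlinarith only [keymul, hWS]
  have hfinal : K₂r * E₁ ≤
      (1000/ε) * (ψ₁/H) * (ψ₂/H') * (1 + 1/(r*H*Real.sin (ang a b a' b'))) * r^2 := by
    rw [hsplit]
    calc K₂r*E₁ ≤ K₂r * (2*(16*r*ψ₁*ψ₂/(sε*H*H'^2)) + 8*ψ₁*ψ₂/Dd) := hfin1
      _ = 416*(r^2*ψ₁*ψ₂)/(sε^2*H*H') + 104*(r*H'*ψ₁*ψ₂)/(sε*Dd) := hfin2
      _ ≤ _ := add_le_add hT1 hT2
  have hC0 : 0 ≤ (1000/ε) * (ψ₁/H) * (ψ₂/H') *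
      (1 + 1/(r*H*Real.sin (ang a b a' b'))) := by
    have hden : 0 < r*H*Real.sin (ang a b a' b') := by positivity
    have h1 : (0:ℝ) ≤ 1 + 1/(r*H*Real.sin (ang a b a' b')) := by positivity
    positivity
  -- final assembly
  calc volume (sigU ψ a b ∩ sigU ψ a' b' ∩ Metric.ball x₀ r)
      = volume (⋃ c' : ℕ, ⋃ c : ℕ,
          sigC ψ a b c ∩ sigC ψ a' b' c' ∩ Metric.ball x₀ r) := by rw [decomp]
    _ ≤ ∑' c' : ℕ, volume (⋃ c : ℕ,
          sigC ψ a b c ∩ sigC ψ a' b' c' ∩ Metric.ball x₀ r) := measure_iUnion_le _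
    _ = ∑ c' ∈ Finset.Icc m₂ (m₂+K₂), volume (⋃ c : ℕ,
          sigC ψ a b c ∩ sigC ψ a' b' c' ∩ Metric.ball x₀ r) := tsum_eq_sum hzero₂
    _ ≤ (Finset.Icc m₂ (m₂+K₂)).card • ENNReal.ofReal E₁ :=
        Finset.sum_le_card_nsmul _ _ _ (fun c' _ => hinner c')
    _ = (K₂ + 1) • ENNReal.ofReal E₁ := by
        rw [Nat.card_Icc]
        congr 1
        omega
    _ ≤ ENNReal.ofReal (K₂r * E₁) := by
        have hcastK : ((K₂+1 : ℕ) : ENNReal) = ENNReal.ofReal ((K₂+1:ℕ):ℝ) :=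
          (ENNReal.ofReal_natCast _).symm
        rw [nsmul_eq_mul, hcastK, ← ENNReal.ofReal_mul (by positivity)]
        apply ENNReal.ofReal_le_ofReal
        push_cast
        exact mul_le_mul_of_nonneg_right hcard₂ hE₁0
    _ ≤ ENNReal.ofReal ((1000/ε) * (ψ₁/H) * (ψ₂/H') *
          (1 + 1/(r*H*Real.sin (ang a b a' b'))) * r^2) := ENNReal.ofReal_le_ofReal hfinal
    _ = ENNReal.ofReal ((1000/ε) * (ψ₁/H) * (ψ₂/H') *
          (1 + 1/(r*H*Real.sin (ang a b a' b')))) * ENNReal.ofReal (r^2) := by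
        rw [← ENNReal.ofReal_mul hC0]
    _ ≤ ENNReal.ofReal ((1000/ε) * (ψ₁/H) * (ψ₂/H') *
          (1 + 1/(r*H*Real.sin (ang a b a' b')))) * volume (Metric.ball x₀ r) :=
        mul_le_mul_right (ball_vol_lb x₀ r hr) _
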